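/- If $W$ is a real $d\times d$ matrix whose directed graph (edges $i\to j$ where $W_{ij}\neq 0$) contains a cycle of length $K \geq 1$ passing through an edge $(i,j)$, then $(\exp(W \odot W))_{ji} > 0$ and consequently $(\nabla h(W))_{ij} = 2 W_{ij} (\exp(W\odot W))_{ji} \neq 0$. -/

import Mathlib

open Matrix

lemma aux_pow_entry_nonneg {d : ℕ} (A : Matrix (Fin d) (Fin d) ℝ)
    (hA : ∀ a b, 0 ≤ A a b) (n : ℕ) : ∀ a b, 0 ≤ (A ^ n) a b := by
  induction n with
  | zero =>
    intro a b
    simp only [pow_zero, Matrix.one_apply]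
    split <;> norm_num
  | succ n ih =>
    intro a b
    rw [pow_succ, Matrix.mul_apply]
    exact Finset.sum_nonneg fun k _ => mul_nonneg (ih a k) (hA k b)

theorem stmt_10 (d : ℕ) (W : Matrix (Fin d) (Fin d) ℝ) (i j : Fin d) (K : ℕ) (hK : 1 ≤ K)
    (f : ℕ → Fin d) (hij : W i j ≠ 0) (hf0 : f 0 = j) (hfK : f (K - 1) = i)
    (hwalk : ∀ k < K - 1, W (f k) (f (k + 1)) ≠ 0) :
    0 < NormedSpace.exp (W ⊙ W) j i ∧
      2 * W i j * NormedSpace.exp (W ⊙ W) j i ≠ 0 := by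
  set A : Matrix (Fin d) (Fin d) ℝ := W ⊙ W with hA
  have hAnn : ∀ a b, 0 ≤ A a b := fun a b => by
    simp only [hA, Matrix.hadamard_apply]; exact mul_self_nonneg _
  -- summability of the exponential series
  have hsum : Summable (fun n : ℕ => ((n.factorial : ℝ)⁻¹) • A ^ n) := by
    letI : SeminormedRing (Matrix (Fin d) (Fin d) ℝ) := Matrix.linftyOpSemiNormedRing
    letI : NormedRing (Matrix (Fin d) (Fin d) ℝ) := Matrix.linftyOpNormedRing
    letI : NormedAlgebra ℝ (Matrix (Fin d) (Fin d) ℝ) := Matrix.linftyOpNormedAlgebra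
    exact NormedSpace.expSeries_summable' A
  have hsum1 : Summable (fun n : ℕ => (((n.factorial : ℝ)⁻¹) • A ^ n) j) :=
    Pi.summable.mp hsum j
  have hsum2 : Summable (fun n : ℕ => (((n.factorial : ℝ)⁻¹) • A ^ n) j i) :=
    Pi.summable.mp hsum1 i
  have hexp : NormedSpace.exp A j i = ∑' n : ℕ, ((n.factorial : ℝ)⁻¹) • (A ^ n) j i := by
    rw [NormedSpace.exp_eq_tsum ℝ]
    beta_reduce
    erw [tsum_apply hsum, tsum_apply hsum1]
    rfl
  -- positivity of the (K-1)-st term via the walk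
  have hpos : ∀ m, m ≤ K - 1 → 0 < (A ^ m) j (f m) := by
    intro m hm
    induction m with
    | zero => rw [hf0]; simp [Matrix.one_apply]
    | succ n ih =>
      have hn : n ≤ K - 1 := Nat.le_of_succ_le hm
      have hlt : n < K - 1 := Nat.lt_of_succ_le hm
      have hW : W (f n) (f (n + 1)) ≠ 0 := hwalk n hlt
      have hAfn : 0 < A (f n) (f (n + 1)) := by
        simp only [hA, Matrix.hadamard_apply]
        exact mul_self_pos.mpr hW
      rw [pow_succ, Matrix.mul_apply]
      refine Finset.sum_pos' (fun k _ => mul_nonneg (aux_pow_entry_nonneg A hAnn n j k)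
        (hAnn k (f (n + 1)))) ⟨f n, Finset.mem_univ _, ?_⟩
      exact mul_pos (ih hn) hAfn
  have hK1 : (A ^ (K - 1)) j i > 0 := by
    have := hpos (K - 1) le_rfl
    rwa [hfK] at this
  have hmain : 0 < NormedSpace.exp A j i := by
    rw [hexp]
    refine Summable.tsum_pos hsum2 (fun n => ?_) (K - 1) ?_
    · exact smul_nonneg (by positivity) (aux_pow_entry_nonneg A hAnn n j i)
    · exact smul_pos (by positivity) hK1
  exact ⟨hmain, mul_ne_zero (mul_ne_zero two_ne_zero hij) (ne_of_gt hmain)⟩
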